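/- Let ω > 0 and let ζ : [0,1] → ℝ be differentiable with ζ(θ) > 0 for all θ ∈ [0,1], and suppose that for all θ ∈ [0,1], |ζ'(θ)/ζ(θ)| ≤ ω(1 + 1/ζ(θ) + ζ(θ)). Suppose θ* ∈ [0,1] satisfies ζ(θ*) = 5/4. Then every θ̃ ∈ [0,1] with |θ̃ − θ*| ≤ 1/(10ω) satisfies 1/2 ≤ ζ(θ̃) ≤ 2. -/

import Mathlib

lemma aux19 (ω : ℝ) (hω : 0 < ω) (ζ ζ' : ℝ → ℝ) (a b : ℝ) (hab : a ≤ b)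
    (hb : b - a ≤ 1 / (10 * ω))
    (hdiff : ∀ θ ∈ Set.Icc a b, HasDerivAt ζ (ζ' θ) θ)
    (hbound : ∀ θ ∈ Set.Icc a b, 1/2 ≤ ζ θ → ζ θ ≤ 2 → |ζ' θ| ≤ 7 * ω)
    (ha : ζ a = 5 / 4) :
    ∀ θ ∈ Set.Icc a b, 1/2 ≤ ζ θ ∧ ζ θ ≤ 2 := by
  set S : Set ℝ := {t | t ∈ Set.Icc a b ∧ ∀ s ∈ Set.Icc a t, 1/2 ≤ ζ s ∧ ζ s ≤ 2} with hS
  have haS : a ∈ S := by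
    refine ⟨⟨le_refl a, hab⟩, fun s hs => ?_⟩
    have : s = a := le_antisymm hs.2 hs.1
    rw [this, ha]; norm_num
  have hbdd : BddAbove S := ⟨b, fun t ht => ht.1.2⟩
  set c := sSup S with hc
  have hac : a ≤ c := le_csSup hbdd haS
  have hcb : c ≤ b := csSup_le ⟨a, haS⟩ (fun t ht => ht.1.2)
  have hcab : c ∈ Set.Icc a b := ⟨hac, hcb⟩
  -- bounds on [a, c)
  have hlt : ∀ s, a ≤ s → s < c → 1/2 ≤ ζ s ∧ ζ s ≤ 2 := by
    intro s hsa hsc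
    obtain ⟨t, htS, hst⟩ := exists_lt_of_lt_csSup ⟨a, haS⟩ hsc
    exact htS.2 s ⟨hsa, hst.le⟩
  -- bound at c
  have hcS : c ∈ S := by
    refine ⟨hcab, fun s hs => ?_⟩
    rcases lt_or_eq_of_le hs.2 with h | h
    · exact hlt s hs.1 h
    rw [h]
    rcases eq_or_lt_of_le hac with h' | h'
    · rw [← h', ha]; norm_num
    · have hcont : ContinuousAt ζ c := (hdiff c hcab).continuousAt
      have htend : Filter.Tendsto ζ (nhdsWithin c (Set.Iio c)) (nhds (ζ c)) :=
        hcont.continuousWithinAt.tendsto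
      have hmem : Set.Ioo a c ∈ nhdsWithin c (Set.Iio c) :=
        Ioo_mem_nhdsLT_of_mem ⟨h', le_refl c⟩
      constructor
      · refine ge_of_tendsto htend ?_
        filter_upwards [hmem] with x hx
        exact (hlt x hx.1.le hx.2).1
      · refine le_of_tendsto htend ?_
        filter_upwards [hmem] with x hx
        exact (hlt x hx.1.le hx.2).2
  -- show c = b
  have hcbeq : c = b := by
    by_contra hne
    have hcltb : c < b := lt_of_le_of_ne hcb hne
    -- MVT on [a, c]
    have hsub : Set.Icc a c ⊆ Set.Icc a b := Set.Icc_subset_Icc le_rfl hcb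
    have hmvt : |ζ c - ζ a| ≤ 7 * ω * (c - a) := by
      have := Convex.norm_image_sub_le_of_norm_hasDerivWithin_le
        (f := ζ) (f' := ζ') (s := Set.Icc a c) (C := 7 * ω)
        (fun x hx => (hdiff x (hsub hx)).hasDerivWithinAt)
        (fun x hx => hbound x (hsub hx) (hcS.2 x hx).1 (hcS.2 x hx).2)
        (convex_Icc a c) ⟨le_refl a, hac⟩ ⟨hac, le_refl c⟩
      rw [Real.norm_eq_abs, Real.norm_eq_abs] at this
      rwa [abs_of_nonneg (sub_nonneg.2 hac)] at this
    have hca : c - a ≤ 1 / (10 * ω) := by linarith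
    have h710 : 7 * ω * (c - a) ≤ 7 / 10 := by
      have := mul_le_mul_of_nonneg_left hca (by positivity : (0:ℝ) ≤ 7 * ω)
      rw [mul_one_div] at this
      have : 7 * ω * (c - a) ≤ 7 * ω / (10 * ω) := this
      rwa [show (7:ℝ) * ω / (10 * ω) = 7 / 10 by field_simp] at this
    have hζc : 11/20 ≤ ζ c ∧ ζ c ≤ 39/20 := by
      rw [ha] at hmvt
      constructor <;> [nlinarith [abs_le.mp hmvt]; nlinarith [abs_le.mp hmvt]]
    -- continuity at c gives a slightly larger element of S
    have hcont : ContinuousAt ζ c := (hdiff c hcab).continuousAt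
    obtain ⟨δ, hδpos, hδ⟩ := Metric.continuousAt_iff.mp hcont (1/20) (by norm_num)
    set t := min b (c + δ/2) with ht
    have hct : c < t := lt_min hcltb (by linarith)
    have htb : t ≤ b := min_le_left _ _
    have htS : t ∈ S := by
      refine ⟨⟨le_trans hac hct.le, htb⟩, fun s hs => ?_⟩
      rcases le_or_gt s c with h | h
      · exact hcS.2 s ⟨hs.1, h⟩
      · have hdist : dist s c < δ := by
          rw [Real.dist_eq, abs_of_pos (by linarith)]
          have : s ≤ c + δ/2 := le_trans hs.2 (min_le_right _ _)
          linarith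
        have := hδ hdist
        rw [Real.dist_eq, abs_lt] at this
        constructor <;> [linarith [hζc.1]; linarith [hζc.2]]
    exact absurd (le_csSup hbdd htS) (not_le.mpr hct)
  intro θ hθ
  exact hcS.2 θ ⟨hθ.1, hcbeq ▸ hθ.2⟩

theorem stmt19 (ω : ℝ) (hω : 0 < ω) (ζ ζ' : ℝ → ℝ)
    (hdiff : ∀ θ ∈ Set.Icc (0 : ℝ) 1, HasDerivAt ζ (ζ' θ) θ)
    (hpos : ∀ θ ∈ Set.Icc (0 : ℝ) 1, 0 < ζ θ)
    (hlip : ∀ θ ∈ Set.Icc (0 : ℝ) 1,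
      |ζ' θ / ζ θ| ≤ ω * (1 + 1 / ζ θ + ζ θ))
    (θstar : ℝ) (hθstar : θstar ∈ Set.Icc (0 : ℝ) 1) (hval : ζ θstar = 5 / 4) :
    ∀ θ ∈ Set.Icc (0 : ℝ) 1, |θ - θstar| ≤ 1 / (10 * ω) →
      1 / 2 ≤ ζ θ ∧ ζ θ ≤ 2 := by
  intro θ hθ hclose
  have hbnd : ∀ x ∈ Set.Icc (0:ℝ) 1, 1/2 ≤ ζ x → ζ x ≤ 2 → |ζ' x| ≤ 7 * ω := by
    intro x hx h1 h2
    have hpx := hpos x hx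
    have h := hlip x hx
    have heq : ζ' x = (ζ' x / ζ x) * ζ x := by field_simp
    rw [heq, abs_mul, abs_of_pos hpx]
    have h1x : 1 / ζ x ≤ 2 := by
      rw [div_le_iff₀ hpx]; linarith
    calc |ζ' x / ζ x| * ζ x ≤ (ω * (1 + 1 / ζ x + ζ x)) * ζ x :=
          mul_le_mul_of_nonneg_right h hpx.le
      _ = ω * (ζ x + 1 + ζ x * ζ x) := by field_simp
      _ ≤ 7 * ω := by nlinarith [mul_nonneg (by linarith : (0:ℝ) ≤ 2 - ζ x) (by linarith : (0:ℝ) ≤ 3 + ζ x), hω.le]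
  rcases le_or_gt θstar θ with hle | hlt
  · have habs : θ - θstar ≤ 1 / (10 * ω) := (abs_le.mp hclose).2
    exact aux19 ω hω ζ ζ' θstar θ hle (by linarith)
      (fun x hx => hdiff x (Set.Icc_subset_Icc hθstar.1 hθ.2 hx))
      (fun x hx => hbnd x (Set.Icc_subset_Icc hθstar.1 hθ.2 hx))
      hval θ ⟨hle, le_refl θ⟩
  · -- reflect: η t = ζ (θ + θstar - t)
    set η : ℝ → ℝ := fun t => ζ (θ + θstar - t) with hη
    set η' : ℝ → ℝ := fun t => ζ' (θ + θstar - t) * (-1) with hη'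
    have hmap : ∀ x ∈ Set.Icc θ θstar, θ + θstar - x ∈ Set.Icc (0:ℝ) 1 := by
      intro x hx
      constructor
      · linarith [hθ.1, hx.2]
      · linarith [hθstar.2, hx.1]
    have hres : ∀ x ∈ Set.Icc θ θstar, HasDerivAt η (η' x) x := by
      intro x hx
      have hinner : HasDerivAt (fun t : ℝ => θ + θstar - t) (-1) x := by
        simpa using (hasDerivAt_id' x).const_sub (θ + θstar)
      exact HasDerivAt.comp x (hdiff _ (hmap x hx)) hinner
    have := aux19 ω hω η η' θ θstar hlt.le
      (by have := (abs_le.mp hclose).1; linarith)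
      hres
      (fun x hx h1 h2 => by
        have := hbnd (θ + θstar - x) (hmap x hx) h1 h2
        simpa [hη', abs_mul] using this)
      (by simp [hη, hval])
      θstar ⟨hlt.le, le_refl θstar⟩
    simpa [hη] using this
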